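/- Let n ∈ ℤ_{−ε} with n > 0, and consider the module π(ε,n). Then W⁺ = span{v_j : j ∈ ℤ_ε, j ≥ n+1} and W⁻ = span{v_j : j ∈ ℤ_ε, j ≤ −(n+1)} are irreducible submodules; their sum W⁺ ⊕ W⁻ is the unique maximal proper submodule of π(ε,n); and the quotient module V_ε/(W⁺ ⊕ W⁻) is irreducible of dimension n (so F_n, the n-dimensional irreducible, is the unique irreducible quotient of π(ε,n)). -/

import Mathlib

namespace SL2Deform

/-- The index set `ℤ_ε = {j : ℤ | (-1)^j = ε}`, for a sign `ε ∈ {1, -1}`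
(i.e. a unit of `ℤ`). -/
abbrev idx (ε : ℤˣ) : Type := {j : ℤ // (-1 : ℤˣ) ^ j = ε}

/-- `V ε`: the complex vector space of finitely supported functions on `ℤ_ε`,
with standard basis `{v_j}`. -/
abbrev V (ε : ℤˣ) : Type := idx ε →₀ ℂ

/-- The standard basis vector `v_j` of `V ε`, for `j ∈ ℤ_ε`. -/
noncomputable def bv (ε : ℤˣ) (j : ℤ) (h : (-1 : ℤˣ) ^ j = ε) : V ε :=
  Finsupp.single ⟨j, h⟩ 1

lemma parity_two : (-1 : ℤˣ) ^ (2 : ℤ) = 1 := by decide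
lemma parity_neg_two : (-1 : ℤˣ) ^ (-2 : ℤ) = 1 := by decide
lemma parity_zero : (-1 : ℤˣ) ^ (0 : ℤ) = 1 := by decide

lemma parity_shift {ε : ℤˣ} {j : ℤ} (h : (-1 : ℤˣ) ^ j = ε) {s : ℤ}
    (hs : (-1 : ℤˣ) ^ s = 1) : (-1 : ℤˣ) ^ (j + s) = ε := by
  rw [zpow_add, h, hs, mul_one]

/-- If `m ∈ ℤ_{-ε}` then `m + 1 ∈ ℤ_ε`. -/
lemma parity_succ {ε : ℤˣ} {m : ℤ} (h : (-1 : ℤˣ) ^ m = -ε) :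
    (-1 : ℤˣ) ^ (m + 1) = ε := by
  rw [zpow_add, h, zpow_one]
  simp

/-- If `m ∈ ℤ_{-ε}` then `m - 1 ∈ ℤ_ε`. -/
lemma parity_pred {ε : ℤˣ} {m : ℤ} (h : (-1 : ℤˣ) ^ m = -ε) :
    (-1 : ℤˣ) ^ (m - 1) = ε := by
  rw [sub_eq_add_neg, zpow_add, h, zpow_neg, zpow_one]
  simp

/-- The linear operator on `V ε` sending `v_j` to `c j • v_{j+s}`,
for an even shift `s`. -/
noncomputable def shiftOp (ε : ℤˣ) (s : ℤ) (hs : (-1 : ℤˣ) ^ s = 1) (c : ℤ → ℂ) :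
    V ε →ₗ[ℂ] V ε :=
  Finsupp.lsum ℂ fun j =>
    LinearMap.toSpanSingleton ℂ (V ε)
      (Finsupp.single ⟨j.1 + s, parity_shift j.2 hs⟩ (c j.1))

/-- `H v_j = j • v_j`. -/
noncomputable def Hop (ε : ℤˣ) : V ε →ₗ[ℂ] V ε :=
  shiftOp ε 0 parity_zero fun j => (j : ℂ)

/-- Principal series: `E v_j = ½(ν + j + 1) • v_{j+2}`. -/
noncomputable def Eop (ε : ℤˣ) (ν : ℂ) : V ε →ₗ[ℂ] V ε :=
  shiftOp ε 2 parity_two fun j => (1 / 2 : ℂ) * (ν + j + 1)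

/-- Principal series: `F v_j = ½(ν - j + 1) • v_{j-2}`. -/
noncomputable def Fop (ε : ℤˣ) (ν : ℂ) : V ε →ₗ[ℂ] V ε :=
  shiftOp ε (-2) parity_neg_two fun j => (1 / 2 : ℂ) * (ν - j + 1)

/-- `f_m(ν) = ½ |ν²-m²|^{1/2} (ν+m)/|ν+m|` for `ν ≠ -m`, and `f_m(-m) = 0`. -/
noncomputable def fm (m : ℤ) (ν : ℂ) : ℂ :=
  if ν = -(m : ℂ) then 0
  else (1 / 2 : ℂ) * (Real.sqrt ‖ν ^ 2 - (m : ℂ) ^ 2‖ : ℝ) * (ν + m) /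
    (‖ν + (m : ℂ)‖ : ℝ)

/-- Deformed module: `E v_{m-1} = f_m(ν) • v_{m+1}`, i.e. `E v_j = f_{j+1}(ν) • v_{j+2}`. -/
noncomputable def PEop (ε : ℤˣ) (ν : ℂ) : V ε →ₗ[ℂ] V ε :=
  shiftOp ε 2 parity_two fun j => fm (j + 1) ν

/-- Deformed module: `F v_{m+1} = f_{-m}(ν) • v_{m-1}`, i.e. `F v_j = f_{-(j-1)}(ν) • v_{j-2}`. -/
noncomputable def PFop (ε : ℤˣ) (ν : ℂ) : V ε →ₗ[ℂ] V ε :=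
  shiftOp ε (-2) parity_neg_two fun j => fm (1 - j) ν

/-- The module `π'(ε,ν)`: `E v_{m-1} = ½(ν - |m|) • v_{m+1}`,
i.e. `E v_j = ½(ν - |j+1|) • v_{j+2}`. -/
noncomputable def E'op (ε : ℤˣ) (ν : ℂ) : V ε →ₗ[ℂ] V ε :=
  shiftOp ε 2 parity_two fun j => (1 / 2 : ℂ) * (ν - ((|j + 1| : ℤ) : ℂ))

/-- The module `π'(ε,ν)`: `F v_{m+1} = ½(ν + |m|) • v_{m-1}`,
i.e. `F v_j = ½(ν + |j-1|) • v_{j-2}`. -/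
noncomputable def F'op (ε : ℤˣ) (ν : ℂ) : V ε →ₗ[ℂ] V ε :=
  shiftOp ε (-2) parity_neg_two fun j => (1 / 2 : ℂ) * (ν + ((|j - 1| : ℤ) : ℂ))

/-- `ν ∈ ℤ_{-ε}`: `ν` is an integer with `(-1)^ν = -ε`. -/
def inZminus (ε : ℤˣ) (ν : ℂ) : Prop :=
  ∃ n : ℤ, ν = (n : ℂ) ∧ (-1 : ℤˣ) ^ n = -ε

section ModuleNotions

variable {M : Type*} [AddCommGroup M] [Module ℂ M]
variable {N : Type*} [AddCommGroup N] [Module ℂ N]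

/-- `W` is a submodule for the module with operators `A, B, C`: it is invariant
under all three operators. -/
def Invariant (A B C : M →ₗ[ℂ] M) (W : Submodule ℂ M) : Prop :=
  (∀ x ∈ W, A x ∈ W) ∧ (∀ x ∈ W, B x ∈ W) ∧ (∀ x ∈ W, C x ∈ W)

/-- The module with operators `A, B, C` is irreducible: its only submodules are
`0` and the whole space. -/
def IsIrreducibleRep (A B C : M →ₗ[ℂ] M) : Prop :=
  ∀ W : Submodule ℂ M, Invariant A B C W → W = ⊥ ∨ W = ⊤

/-- `W` is an irreducible submodule: invariant, nonzero, and with no nonzero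
proper invariant subspace. -/
def IsIrreducibleSubmodule (A B C : M →ₗ[ℂ] M) (W : Submodule ℂ M) : Prop :=
  Invariant A B C W ∧ W ≠ ⊥ ∧
    ∀ U : Submodule ℂ M, Invariant A B C U → U ≤ W → U = ⊥ ∨ U = W

/-- The module with operators `A, B, C` is completely reducible: every invariant
subspace has an invariant complement. -/
def CompletelyReducible (A B C : M →ₗ[ℂ] M) : Prop :=
  ∀ W : Submodule ℂ M, Invariant A B C W →
    ∃ U : Submodule ℂ M, Invariant A B C U ∧ IsCompl W U

/-- The two modules (given by operator triples) are isomorphic. -/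
def Intertwined (A B C : M →ₗ[ℂ] M) (A' B' C' : N →ₗ[ℂ] N) : Prop :=
  ∃ e : M ≃ₗ[ℂ] N, (∀ x, e (A x) = A' (e x)) ∧ (∀ x, e (B x) = B' (e x)) ∧
    (∀ x, e (C x) = C' (e x))

/-- An invariant Hermitian form for the module with operators `A, B, C`
(`A` playing the role of `H`, `B` of `E`, `C` of `F`): a sesquilinear form,
conjugate-symmetric, with `⟨Hv,w⟩ = ⟨v,Hw⟩`, `⟨Ev,w⟩ + ⟨v,Fw⟩ = 0`,
`⟨Fv,w⟩ + ⟨v,Ew⟩ = 0`. -/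
structure IsInvHermForm (A B C : M →ₗ[ℂ] M) (Φ : M → M → ℂ) : Prop where
  add_left : ∀ u v w, Φ (u + v) w = Φ u w + Φ v w
  smul_left : ∀ (a : ℂ) (v w : M), Φ (a • v) w = a * Φ v w
  conj_symm : ∀ v w, Φ w v = (starRingEnd ℂ) (Φ v w)
  inv_A : ∀ v w, Φ (A v) w = Φ v (A w)
  inv_BC : ∀ v w, Φ (B v) w + Φ v (C w) = 0
  inv_CB : ∀ v w, Φ (C v) w + Φ v (B w) = 0

end ModuleNotions

/-- `span{v_j : j ≥ n}`. -/
noncomputable def spanGE (ε : ℤˣ) (n : ℤ) : Submodule ℂ (V ε) :=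
  Submodule.span ℂ {x : V ε | ∃ j : idx ε, n ≤ j.1 ∧ x = Finsupp.single j 1}

/-- `span{v_j : j ≤ n}`. -/
noncomputable def spanLE (ε : ℤˣ) (n : ℤ) : Submodule ℂ (V ε) :=
  Submodule.span ℂ {x : V ε | ∃ j : idx ε, j.1 ≤ n ∧ x = Finsupp.single j 1}

/-- `span{v_j : |j| ≤ n}`. -/
noncomputable def spanAbsLE (ε : ℤˣ) (n : ℤ) : Submodule ℂ (V ε) :=
  Submodule.span ℂ {x : V ε | ∃ j : idx ε, |j.1| ≤ n ∧ x = Finsupp.single j 1}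

/-- The diagonal operator `S v_j = c j • v_j`. -/
noncomputable def diagMap (ε : ℤˣ) (c : idx ε → ℂ) : V ε →ₗ[ℂ] V ε :=
  Finsupp.lsum ℂ fun j => LinearMap.toSpanSingleton ℂ (V ε) (Finsupp.single j (c j))

section Helpers

variable {ε : ℤˣ}

lemma parity_even (t : ℤ) : (-1 : ℤˣ) ^ (2 * t) = 1 := by
  rw [zpow_mul, parity_two, one_zpow]

lemma even_diff {a b : ℤ} (ha : (-1 : ℤˣ) ^ a = ε) (hb : (-1 : ℤˣ) ^ b = ε) :
    ∃ t : ℤ, a = b + 2 * t := by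
  have h1 : (-1 : ℤˣ) ^ (a - b) = 1 := by
    rw [sub_eq_add_neg, zpow_add, ha, zpow_neg, hb, mul_inv_cancel]
  rcases Int.even_or_odd (a - b) with ⟨t, ht⟩ | ⟨t, ht⟩
  · exact ⟨t, by omega⟩
  · exfalso
    rw [ht, zpow_add, parity_even, one_mul, zpow_one] at h1
    exact absurd h1 (by decide)

lemma shiftOp_single {s : ℤ} (hs : (-1 : ℤˣ) ^ s = 1) (c : ℤ → ℂ) (j : idx ε) (a : ℂ) :
    shiftOp ε s hs c (Finsupp.single j a)
      = (a * c j.1) • Finsupp.single (⟨j.1 + s, parity_shift j.2 hs⟩ : idx ε) 1 := by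
  rw [shiftOp, Finsupp.lsum_single, LinearMap.toSpanSingleton_apply]
  simp [Finsupp.smul_single, smul_eq_mul]

lemma Hop_apply_coord (x : V ε) (k : idx ε) : Hop ε x k = (k.1 : ℂ) * x k := by
  induction x using Finsupp.induction_linear with
  | zero => simp
  | add f g hf hg => rw [map_add, Finsupp.add_apply, hf, hg, Finsupp.add_apply]; ring
  | single j a =>
    rw [Hop, shiftOp_single]
    have hj : (⟨j.1 + 0, parity_shift j.2 parity_zero⟩ : idx ε) = j := Subtype.ext (add_zero _)
    rw [hj]
    rcases eq_or_ne k j with rfl | h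
    · simp [mul_comm]
    · simp [Finsupp.single_eq_of_ne' (Ne.symm h)]

lemma support_shiftOp {s : ℤ} (hs : (-1 : ℤˣ) ^ s = 1) (c : ℤ → ℂ) (x : V ε) {k : idx ε}
    (hk : k ∈ (shiftOp ε s hs c x).support) :
    ∃ j ∈ x.support, c j.1 ≠ 0 ∧ k.1 = j.1 + s := by
  classical
  rw [shiftOp, Finsupp.lsum_apply] at hk
  have h2 := Finsupp.support_sum hk
  obtain ⟨j, hj, hkj⟩ := Finset.mem_biUnion.mp h2
  rw [LinearMap.toSpanSingleton_apply, Finsupp.smul_single, Finsupp.mem_support_single] at hkj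
  obtain ⟨hk1, hk2⟩ := hkj
  refine ⟨j, hj, ?_, by rw [hk1]⟩
  intro h0
  exact hk2 (by rw [h0, smul_zero])

lemma mem_of_smul_mem {U : Submodule ℂ (V ε)} {c : ℂ} (hc : c ≠ 0) {v : V ε}
    (h : c • v ∈ U) : v ∈ U := by
  have := U.smul_mem c⁻¹ h
  rwa [smul_smul, inv_mul_cancel₀ hc, one_smul] at this

lemma single_mem_of_H_stable {U : Submodule ℂ (V ε)} (hH : ∀ x ∈ U, Hop ε x ∈ U) :
    ∀ (N : ℕ) (x : V ε), x ∈ U → x.support.card ≤ N →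
      ∀ k ∈ x.support, Finsupp.single k (1 : ℂ) ∈ U := by
  intro N
  induction N with
  | zero =>
    intro x _ hc k hk
    rw [Nat.le_zero, Finset.card_eq_zero] at hc
    rw [hc] at hk
    exact absurd hk (Finset.notMem_empty k)
  | succ N ih =>
    intro x hx hc k hk
    by_cases hall : ∀ j ∈ x.support, j = k
    · have hxk : x k ≠ 0 := Finsupp.mem_support_iff.mp hk
      have hxe : x = Finsupp.single k (x k) := by
        ext m
        rcases eq_or_ne m k with rfl | hm
        · simp
        · have hns : m ∉ x.support := fun hm' => hm (hall m hm')
          rw [Finsupp.notMem_support_iff.mp hns, Finsupp.single_eq_of_ne' (Ne.symm hm)]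
      have : Finsupp.single k (1 : ℂ) = (x k)⁻¹ • x := by
        conv_rhs => rw [hxe]
        simp [inv_mul_cancel₀ hxk]
      rw [this]
      exact U.smul_mem _ hx
    · push_neg at hall
      obtain ⟨j, hj, hjk⟩ := hall
      set y := Hop ε x - (j.1 : ℂ) • x with hy
      have hyU : y ∈ U := U.sub_mem (hH x hx) (U.smul_mem _ hx)
      have hyc : ∀ m : idx ε, y m = ((m.1 : ℂ) - (j.1 : ℂ)) * x m := by
        intro m
        rw [hy, Finsupp.sub_apply, Finsupp.smul_apply, Hop_apply_coord, smul_eq_mul]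
        ring
      have hsub : y.support ⊆ x.support.erase j := by
        intro m hm
        rw [Finsupp.mem_support_iff] at hm
        refine Finset.mem_erase.mpr ⟨?_, ?_⟩
        · rintro rfl
          exact hm (by rw [hyc]; simp)
        · rw [Finsupp.mem_support_iff]
          intro h0
          exact hm (by rw [hyc, h0, mul_zero])
      have hcard : y.support.card ≤ N := by
        have h1 := Finset.card_le_card hsub
        have h2 : (x.support.erase j).card = x.support.card - 1 :=
          Finset.card_erase_of_mem hj
        omega
      have hky : k ∈ y.support := by
        rw [Finsupp.mem_support_iff, hyc]
        refine mul_ne_zero ?_ (Finsupp.mem_support_iff.mp hk)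
        rw [sub_ne_zero]
        have hne : (k.1 : ℤ) ≠ j.1 := fun h => hjk (Subtype.ext h.symm)
        exact_mod_cast hne
      exact ih y hyU hcard k hky

lemma single_mem {U : Submodule ℂ (V ε)} (hH : ∀ x ∈ U, Hop ε x ∈ U) {x : V ε}
    (hx : x ∈ U) {k : idx ε} (hk : k ∈ x.support) : Finsupp.single k (1 : ℂ) ∈ U :=
  single_mem_of_H_stable hH x.support.card x hx le_rfl k hk

lemma eq_top_of_single {U : Submodule ℂ (V ε)}
    (h : ∀ k : idx ε, Finsupp.single k (1 : ℂ) ∈ U) : U = ⊤ := by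
  rw [eq_top_iff]
  intro x _
  have hx : x = x.sum fun k a => a • Finsupp.single k (1 : ℂ) := by
    conv_lhs => rw [← Finsupp.sum_single x]
    exact Finsupp.sum_congr fun k _ => by rw [Finsupp.smul_single, smul_eq_mul, mul_one]
  rw [hx]
  exact Submodule.sum_mem U fun k _ => U.smul_mem _ (h k)

lemma coefE_ne {n j : ℤ} (h : n + j + 1 ≠ 0) : (1 / 2 : ℂ) * ((n : ℂ) + (j : ℂ) + 1) ≠ 0 := by
  refine mul_ne_zero (by norm_num) ?_
  have : ((n : ℂ) + (j : ℂ) + 1) = ((n + j + 1 : ℤ) : ℂ) := by push_cast; ring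
  rw [this]
  exact_mod_cast h

lemma coefF_ne {n j : ℤ} (h : n - j + 1 ≠ 0) : (1 / 2 : ℂ) * ((n : ℂ) - (j : ℂ) + 1) ≠ 0 := by
  refine mul_ne_zero (by norm_num) ?_
  have : ((n : ℂ) - (j : ℂ) + 1) = ((n - j + 1 : ℤ) : ℂ) := by push_cast; ring
  rw [this]
  exact_mod_cast h

lemma Estep {n : ℤ} {U : Submodule ℂ (V ε)} (hE : ∀ x ∈ U, Eop ε (n : ℂ) x ∈ U)
    {j : idx ε} (hj : Finsupp.single j (1 : ℂ) ∈ U) (hne : n + j.1 + 1 ≠ 0) :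
    Finsupp.single (⟨j.1 + 2, parity_shift j.2 parity_two⟩ : idx ε) (1 : ℂ) ∈ U := by
  have h := hE _ hj
  rw [Eop, shiftOp_single] at h
  exact mem_of_smul_mem (by rw [one_mul]; exact coefE_ne hne) h

lemma Fstep {n : ℤ} {U : Submodule ℂ (V ε)} (hF : ∀ x ∈ U, Fop ε (n : ℂ) x ∈ U)
    {j : idx ε} (hj : Finsupp.single j (1 : ℂ) ∈ U) (hne : n - j.1 + 1 ≠ 0) :
    Finsupp.single (⟨j.1 + -2, parity_shift j.2 parity_neg_two⟩ : idx ε) (1 : ℂ) ∈ U := by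
  have h := hF _ hj
  rw [Fop, shiftOp_single] at h
  exact mem_of_smul_mem (by rw [one_mul]; exact coefF_ne hne) h

lemma reach_up {n : ℤ} {U : Submodule ℂ (V ε)} (hE : ∀ x ∈ U, Eop ε (n : ℂ) x ∈ U)
    {k : idx ε} (hk : Finsupp.single k (1 : ℂ) ∈ U) (hbig : -(n + 1) < k.1) :
    ∀ (m : ℕ) (j : idx ε), j.1 = k.1 + 2 * m → Finsupp.single j (1 : ℂ) ∈ U := by
  intro m
  induction m with
  | zero =>
    intro j hj
    rwa [show j = k from Subtype.ext (by push_cast at hj; omega)]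
  | succ m ih =>
    intro j hj
    have hm : (k.1 + 2 * (m : ℤ)) + 2 = j.1 := by push_cast at hj ⊢; omega
    set k' : idx ε := ⟨k.1 + 2 * (m : ℤ), parity_shift k.2 (parity_even m)⟩ with hk'
    have h1 : Finsupp.single k' (1 : ℂ) ∈ U := ih k' rfl
    have h2 := Estep hE h1 (by simp only [hk']; omega)
    rwa [show (⟨k'.1 + 2, parity_shift k'.2 parity_two⟩ : idx ε) = j from
      Subtype.ext (by simp only [hk']; omega)] at h2

lemma reach_down {n : ℤ} {U : Submodule ℂ (V ε)} (hF : ∀ x ∈ U, Fop ε (n : ℂ) x ∈ U)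
    {k : idx ε} (hk : Finsupp.single k (1 : ℂ) ∈ U) (hsmall : k.1 < n + 1) :
    ∀ (m : ℕ) (j : idx ε), j.1 = k.1 - 2 * m → Finsupp.single j (1 : ℂ) ∈ U := by
  intro m
  induction m with
  | zero =>
    intro j hj
    rwa [show j = k from Subtype.ext (by push_cast at hj; omega)]
  | succ m ih =>
    intro j hj
    set k' : idx ε := ⟨k.1 - 2 * (m : ℤ), by
      rw [show k.1 - 2 * (m : ℤ) = k.1 + 2 * (-(m : ℤ)) from by ring]
      exact parity_shift k.2 (parity_even (-(m : ℤ)))⟩ with hk'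
    have h1 : Finsupp.single k' (1 : ℂ) ∈ U := ih k' rfl
    have h2 := Fstep hF h1 (by simp only [hk']; omega)
    rwa [show (⟨k'.1 + -2, parity_shift k'.2 parity_neg_two⟩ : idx ε) = j from
      Subtype.ext (by simp only [hk']; push_cast at hj ⊢; omega)] at h2

lemma reach_down_to {n : ℤ} {U : Submodule ℂ (V ε)} (hF : ∀ x ∈ U, Fop ε (n : ℂ) x ∈ U)
    (ht : (-1 : ℤˣ) ^ (n + 1) = ε) :
    ∀ (m : ℕ) (k : idx ε), k.1 = (n + 1) + 2 * m → Finsupp.single k (1 : ℂ) ∈ U →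
      Finsupp.single (⟨n + 1, ht⟩ : idx ε) (1 : ℂ) ∈ U := by
  intro m
  induction m with
  | zero =>
    intro k hk h
    rwa [show (⟨n + 1, ht⟩ : idx ε) = k from
      Subtype.ext (show (n : ℤ) + 1 = k.1 by push_cast at hk; omega)]
  | succ m ih =>
    intro k hk h
    push_cast at hk
    have h2 := Fstep hF h (by omega)
    exact ih ⟨k.1 + -2, parity_shift k.2 parity_neg_two⟩ (by push_cast; omega) h2

lemma reach_up_to {n : ℤ} {U : Submodule ℂ (V ε)} (hE : ∀ x ∈ U, Eop ε (n : ℂ) x ∈ U)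
    (ht : (-1 : ℤˣ) ^ (-(n + 1)) = ε) :
    ∀ (m : ℕ) (k : idx ε), k.1 = -(n + 1) - 2 * m → Finsupp.single k (1 : ℂ) ∈ U →
      Finsupp.single (⟨-(n + 1), ht⟩ : idx ε) (1 : ℂ) ∈ U := by
  intro m
  induction m with
  | zero =>
    intro k hk h
    rwa [show (⟨-(n + 1), ht⟩ : idx ε) = k from
      Subtype.ext (show -((n : ℤ) + 1) = k.1 by push_cast at hk; omega)]
  | succ m ih =>
    intro k hk h
    push_cast at hk
    have h2 := Estep hE h (by omega)
    exact ih ⟨k.1 + 2, parity_shift k.2 parity_two⟩ (by push_cast; omega) h2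

lemma spanGE_eq (n : ℤ) :
    spanGE ε n = Finsupp.supported ℂ ℂ {j : idx ε | n ≤ j.1} := by
  rw [Finsupp.supported_eq_span_single, spanGE]
  congr 1
  ext x
  constructor
  · rintro ⟨j, hj, rfl⟩; exact ⟨j, hj, rfl⟩
  · rintro ⟨j, hj, rfl⟩; exact ⟨j, hj, rfl⟩

lemma spanLE_eq (n : ℤ) :
    spanLE ε n = Finsupp.supported ℂ ℂ {j : idx ε | j.1 ≤ n} := by
  rw [Finsupp.supported_eq_span_single, spanLE]
  congr 1
  ext x
  constructor
  · rintro ⟨j, hj, rfl⟩; exact ⟨j, hj, rfl⟩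
  · rintro ⟨j, hj, rfl⟩; exact ⟨j, hj, rfl⟩

end Helpers

section Structure

variable {ε : ℤˣ} {n : ℤ}

lemma coefE_int {n j : ℤ} (h : (1 / 2 : ℂ) * ((n : ℂ) + (j : ℂ) + 1) ≠ 0) :
    n + j + 1 ≠ 0 := by
  intro h0
  apply h
  have : ((n : ℂ) + (j : ℂ) + 1) = ((n + j + 1 : ℤ) : ℂ) := by push_cast; ring
  rw [this, h0]
  simp

lemma coefF_int {n j : ℤ} (h : (1 / 2 : ℂ) * ((n : ℂ) - (j : ℂ) + 1) ≠ 0) :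
    n - j + 1 ≠ 0 := by
  intro h0
  apply h
  have : ((n : ℂ) - (j : ℂ) + 1) = ((n - j + 1 : ℤ) : ℂ) := by push_cast; ring
  rw [this, h0]
  simp

lemma invGE (hn : (-1 : ℤˣ) ^ n = -ε) (hpos : 0 < n) :
    Invariant (Hop ε) (Eop ε (n : ℂ)) (Fop ε (n : ℂ)) (spanGE ε (n + 1)) := by
  have hp1 := parity_succ hn
  rw [spanGE_eq]
  refine ⟨?_, ?_, ?_⟩ <;> intro x hx <;>
    rw [Finsupp.mem_supported] at hx ⊢ <;> intro k hk
  · unfold Hop at hk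
    obtain ⟨j, hj, -, hkj⟩ := support_shiftOp _ _ _ hk
    have hjx : (n + 1 : ℤ) ≤ j.1 := hx hj
    show n + 1 ≤ k.1
    omega
  · unfold Eop at hk
    obtain ⟨j, hj, -, hkj⟩ := support_shiftOp _ _ _ hk
    have hjx : (n + 1 : ℤ) ≤ j.1 := hx hj
    show n + 1 ≤ k.1
    omega
  · unfold Fop at hk
    obtain ⟨j, hj, hc, hkj⟩ := support_shiftOp _ _ _ hk
    have hjx : (n + 1 : ℤ) ≤ j.1 := hx hj
    have hj2 : n - j.1 + 1 ≠ 0 := coefF_int hc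
    obtain ⟨t, ht⟩ := even_diff j.2 hp1
    show n + 1 ≤ k.1
    omega

lemma invLE (hn : (-1 : ℤˣ) ^ n = -ε) (hpos : 0 < n) :
    Invariant (Hop ε) (Eop ε (n : ℂ)) (Fop ε (n : ℂ)) (spanLE ε (-(n + 1))) := by
  have hp1 := parity_succ hn
  have hm1 : (-1 : ℤˣ) ^ (-(n + 1)) = ε := by
    rw [show -(n + 1) = (n + 1) + 2 * (-(n + 1)) from by ring]
    exact parity_shift hp1 (parity_even _)
  rw [spanLE_eq]
  refine ⟨?_, ?_, ?_⟩ <;> intro x hx <;>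
    rw [Finsupp.mem_supported] at hx ⊢ <;> intro k hk
  · unfold Hop at hk
    obtain ⟨j, hj, -, hkj⟩ := support_shiftOp _ _ _ hk
    have hjx : j.1 ≤ -(n + 1) := hx hj
    show k.1 ≤ -(n + 1)
    omega
  · unfold Eop at hk
    obtain ⟨j, hj, hc, hkj⟩ := support_shiftOp _ _ _ hk
    have hjx : j.1 ≤ -(n + 1) := hx hj
    have hj2 : n + j.1 + 1 ≠ 0 := coefE_int hc
    obtain ⟨t, ht⟩ := even_diff j.2 hm1
    show k.1 ≤ -(n + 1)
    omega
  · unfold Fop at hk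
    obtain ⟨j, hj, -, hkj⟩ := support_shiftOp _ _ _ hk
    have hjx : j.1 ≤ -(n + 1) := hx hj
    show k.1 ≤ -(n + 1)
    omega

lemma sup_eq (hn : (-1 : ℤˣ) ^ n = -ε) :
    spanGE ε (n + 1) ⊔ spanLE ε (-(n + 1))
      = Finsupp.supported ℂ ℂ
          ({j : idx ε | n + 1 ≤ j.1} ∪ {j : idx ε | j.1 ≤ -(n + 1)}) := by
  rw [spanGE_eq, spanLE_eq, Finsupp.supported_union]

lemma invSup (hn : (-1 : ℤˣ) ^ n = -ε) (hpos : 0 < n) :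
    Invariant (Hop ε) (Eop ε (n : ℂ)) (Fop ε (n : ℂ))
      (spanGE ε (n + 1) ⊔ spanLE ε (-(n + 1))) := by
  obtain ⟨hGH, hGE, hGF⟩ := invGE hn hpos
  obtain ⟨hLH, hLE, hLF⟩ := invLE hn hpos
  have hsup : ∀ (A : V ε →ₗ[ℂ] V ε),
      (∀ x ∈ spanGE ε (n + 1), A x ∈ spanGE ε (n + 1)) →
      (∀ x ∈ spanLE ε (-(n + 1)), A x ∈ spanLE ε (-(n + 1))) →
      ∀ x ∈ spanGE ε (n + 1) ⊔ spanLE ε (-(n + 1)),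
        A x ∈ spanGE ε (n + 1) ⊔ spanLE ε (-(n + 1)) := by
    intro A h1 h2 x hx
    obtain ⟨y, hy, z, hz, rfl⟩ := Submodule.mem_sup.mp hx
    rw [map_add]
    exact Submodule.add_mem_sup (h1 y hy) (h2 z hz)
  exact ⟨hsup _ hGH hLH, hsup _ hGE hLE, hsup _ hGF hLF⟩

lemma irrGE (hn : (-1 : ℤˣ) ^ n = -ε) (hpos : 0 < n) :
    IsIrreducibleSubmodule (Hop ε) (Eop ε (n : ℂ)) (Fop ε (n : ℂ)) (spanGE ε (n + 1)) := by
  have hp1 := parity_succ hn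
  refine ⟨invGE hn hpos, ?_, ?_⟩
  · rw [Submodule.ne_bot_iff]
    refine ⟨Finsupp.single (⟨n + 1, hp1⟩ : idx ε) 1, ?_, ?_⟩
    · rw [spanGE_eq]
      exact Finsupp.single_mem_supported ℂ 1 (le_refl (n + 1))
    · simp [Finsupp.single_eq_zero]
  · intro U hU hUle
    by_cases hUbot : U = ⊥
    · exact Or.inl hUbot
    right
    obtain ⟨x, hxU, hxne⟩ := (Submodule.ne_bot_iff U).mp hUbot
    obtain ⟨k, hk⟩ := Finsupp.support_nonempty_iff.mpr hxne
    have hsk : Finsupp.single k (1 : ℂ) ∈ U := single_mem hU.1 hxU hk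
    have hkge : n + 1 ≤ k.1 := by
      have hxs := hUle hxU
      rw [spanGE_eq, Finsupp.mem_supported] at hxs
      exact hxs hk
    obtain ⟨t, ht⟩ := even_diff k.2 hp1
    have hbase : Finsupp.single (⟨n + 1, hp1⟩ : idx ε) (1 : ℂ) ∈ U :=
      reach_down_to hU.2.2 hp1 t.toNat k (by push_cast; omega) hsk
    refine le_antisymm hUle ?_
    rw [spanGE, Submodule.span_le]
    rintro y ⟨j, hj, rfl⟩
    obtain ⟨t', ht'⟩ := even_diff j.2 hp1
    exact reach_up hU.2.1 hbase (show -(n + 1) < (n + 1 : ℤ) by omega) t'.toNat j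
      (show j.1 = (n + 1) + 2 * (t'.toNat : ℤ) by omega)

lemma irrLE (hn : (-1 : ℤˣ) ^ n = -ε) (hpos : 0 < n) :
    IsIrreducibleSubmodule (Hop ε) (Eop ε (n : ℂ)) (Fop ε (n : ℂ))
      (spanLE ε (-(n + 1))) := by
  have hp1 := parity_succ hn
  have hm1 : (-1 : ℤˣ) ^ (-(n + 1)) = ε := by
    rw [show -(n + 1) = (n + 1) + 2 * (-(n + 1)) from by ring]
    exact parity_shift hp1 (parity_even _)
  refine ⟨invLE hn hpos, ?_, ?_⟩
  · rw [Submodule.ne_bot_iff]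
    refine ⟨Finsupp.single (⟨-(n + 1), hm1⟩ : idx ε) 1, ?_, ?_⟩
    · rw [spanLE_eq]
      exact Finsupp.single_mem_supported ℂ 1 (le_refl (-(n + 1)))
    · simp [Finsupp.single_eq_zero]
  · intro U hU hUle
    by_cases hUbot : U = ⊥
    · exact Or.inl hUbot
    right
    obtain ⟨x, hxU, hxne⟩ := (Submodule.ne_bot_iff U).mp hUbot
    obtain ⟨k, hk⟩ := Finsupp.support_nonempty_iff.mpr hxne
    have hsk : Finsupp.single k (1 : ℂ) ∈ U := single_mem hU.1 hxU hk
    have hkle : k.1 ≤ -(n + 1) := by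
      have hxs := hUle hxU
      rw [spanLE_eq, Finsupp.mem_supported] at hxs
      exact hxs hk
    obtain ⟨t, ht⟩ := even_diff k.2 hm1
    have hbase : Finsupp.single (⟨-(n + 1), hm1⟩ : idx ε) (1 : ℂ) ∈ U :=
      reach_up_to hU.2.1 hm1 (-t).toNat k (by push_cast; omega) hsk
    refine le_antisymm hUle ?_
    rw [spanLE, Submodule.span_le]
    rintro y ⟨j, hj, rfl⟩
    obtain ⟨t', ht'⟩ := even_diff j.2 hm1
    exact reach_down hU.2.2 hbase (show (-(n + 1) : ℤ) < n + 1 by omega) (-t').toNat j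
      (show j.1 = -(n + 1) - 2 * ((-t').toNat : ℤ) by omega)

lemma maximality (hn : (-1 : ℤˣ) ^ n = -ε) (hpos : 0 < n) :
    ∀ U : Submodule ℂ (V ε),
      Invariant (Hop ε) (Eop ε (n : ℂ)) (Fop ε (n : ℂ)) U → U ≠ ⊤ →
        U ≤ spanGE ε (n + 1) ⊔ spanLE ε (-(n + 1)) := by
  intro U hU hUne
  rw [sup_eq hn]
  intro x hx
  rw [Finsupp.mem_supported]
  intro k hk
  by_contra hkmem
  simp only [Set.mem_union, Set.mem_setOf_eq, not_or, not_le] at hkmem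
  obtain ⟨h1, h2⟩ := hkmem
  have hsk : Finsupp.single k (1 : ℂ) ∈ U := single_mem hU.1 hx hk
  apply hUne
  apply eq_top_of_single
  intro j
  obtain ⟨t, ht⟩ := even_diff j.2 k.2
  rcases le_or_gt 0 t with htp | htn
  · exact reach_up hU.2.1 hsk (by omega) t.toNat j (by push_cast; omega)
  · exact reach_down hU.2.2 hsk (by omega) (-t).toNat j (by push_cast; omega)

end Structure

lemma finrank_quot {ε : ℤˣ} {n : ℤ} (hn : (-1 : ℤˣ) ^ n = -ε) (hpos : 0 < n) :
    (Module.finrank ℂ (V ε ⧸ (spanGE ε (n + 1) ⊔ spanLE ε (-(n + 1)))) : ℤ) = n := by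
  have hp1 := parity_succ hn
  set sMid : Set (idx ε) := {j : idx ε | -(n + 1) < j.1 ∧ j.1 < n + 1} with hsMid
  have hf : ∀ i : Fin n.toNat,
      ((⟨n + 1 + 2 * ((i.1 : ℤ) - n), parity_shift hp1 (parity_even _)⟩ : idx ε) ∈ sMid) := by
    intro i
    have hi := i.2
    constructor
    · show -(n + 1) < n + 1 + 2 * ((i.1 : ℤ) - n); omega
    · show n + 1 + 2 * ((i.1 : ℤ) - n) < n + 1; omega
  let f : Fin n.toNat → ↥sMid := fun i =>
    ⟨⟨n + 1 + 2 * ((i.1 : ℤ) - n), parity_shift hp1 (parity_even _)⟩, hf i⟩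
  have hbij : Function.Bijective f := by
    constructor
    · intro i i' h
      have h1 : n + 1 + 2 * ((i.1 : ℤ) - n) = n + 1 + 2 * ((i'.1 : ℤ) - n) :=
        congrArg (fun z => z.1.1) h
      exact Fin.ext (by omega)
    · rintro ⟨j, hj⟩
      obtain ⟨hj1, hj2⟩ := hj
      obtain ⟨t, ht⟩ := even_diff j.2 hp1
      refine ⟨⟨(t + n).toNat, by omega⟩, ?_⟩
      refine Subtype.ext (Subtype.ext ?_)
      show n + 1 + 2 * ((((t + n).toNat : ℕ) : ℤ) - n) = j.1
      omega
  let e0 : Fin n.toNat ≃ ↥sMid := Equiv.ofBijective f hbij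
  haveI : Fintype ↥sMid := Fintype.ofEquiv _ e0
  have hcard : Fintype.card ↥sMid = n.toNat := by
    rw [← Fintype.card_fin n.toNat]
    exact (Fintype.card_congr e0).symm
  have huniv : (({j : idx ε | n + 1 ≤ j.1} ∪ {j : idx ε | j.1 ≤ -(n + 1)}) ∪ sMid)
      = Set.univ := by
    ext j
    simp only [hsMid, Set.mem_union, Set.mem_setOf_eq, Set.mem_univ, iff_true]
    omega
  have hcompl : IsCompl (spanGE ε (n + 1) ⊔ spanLE ε (-(n + 1)))
      (Finsupp.supported ℂ ℂ sMid) := by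
    constructor
    · rw [sup_eq hn]
      refine Finsupp.disjoint_supported_supported ?_
      rw [Set.disjoint_left]
      intro j hj hjm
      have h1 : n + 1 ≤ j.1 ∨ j.1 ≤ -(n + 1) := hj
      have h2 : -(n + 1) < j.1 ∧ j.1 < n + 1 := hjm
      omega
    · rw [codisjoint_iff, sup_eq hn, ← Finsupp.supported_union, huniv,
        Finsupp.supported_univ]
  have e1 : (V ε ⧸ (spanGE ε (n + 1) ⊔ spanLE ε (-(n + 1)))) ≃ₗ[ℂ]
      ↥(Finsupp.supported ℂ ℂ sMid) :=
    Submodule.quotientEquivOfIsCompl _ _ hcompl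
  have e2 : (Finsupp.supported ℂ ℂ sMid) ≃ₗ[ℂ] (↥sMid →₀ ℂ) :=
    Finsupp.supportedEquivFinsupp sMid
  have e3 := Finsupp.linearEquivFunOnFinite ℂ ℂ ↥sMid
  have h4 : Module.finrank ℂ (V ε ⧸ (spanGE ε (n + 1) ⊔ spanLE ε (-(n + 1))))
      = Fintype.card ↥sMid := by
    rw [e1.finrank_eq]
    rw [e2.finrank_eq]
    rw [e3.finrank_eq]
    exact Module.finrank_pi ℂ
  rw [h4, hcard]
  omega


/-- For `n ∈ ℤ_{-ε}`, `n > 0`, in `π(ε,n)`: `W⁺ = span{v_j : j ≥ n+1}`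
and `W⁻ = span{v_j : j ≤ -(n+1)}` are irreducible submodules; `W⁺ ⊕ W⁻` is the
unique maximal proper submodule; and the quotient `V_ε/(W⁺ ⊕ W⁻)` is irreducible of
dimension `n` (the unique irreducible quotient `F_n`). -/
theorem principal_series_n_pos_structure (ε : ℤˣ) (n : ℤ)
    (hn : (-1 : ℤˣ) ^ n = -ε) (hpos : 0 < n) :
    IsIrreducibleSubmodule (Hop ε) (Eop ε (n : ℂ)) (Fop ε (n : ℂ)) (spanGE ε (n + 1)) ∧
    IsIrreducibleSubmodule (Hop ε) (Eop ε (n : ℂ)) (Fop ε (n : ℂ)) (spanLE ε (-(n + 1))) ∧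
    spanGE ε (n + 1) ⊓ spanLE ε (-(n + 1)) = ⊥ ∧
    (spanGE ε (n + 1) ⊔ spanLE ε (-(n + 1)) ≠ ⊤ ∧
      ∀ U : Submodule ℂ (V ε),
        Invariant (Hop ε) (Eop ε (n : ℂ)) (Fop ε (n : ℂ)) U → U ≠ ⊤ →
          U ≤ spanGE ε (n + 1) ⊔ spanLE ε (-(n + 1))) ∧
    ∃ (hH : spanGE ε (n + 1) ⊔ spanLE ε (-(n + 1)) ≤
        (spanGE ε (n + 1) ⊔ spanLE ε (-(n + 1))).comap (Hop ε))
      (hE : spanGE ε (n + 1) ⊔ spanLE ε (-(n + 1)) ≤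
        (spanGE ε (n + 1) ⊔ spanLE ε (-(n + 1))).comap (Eop ε (n : ℂ)))
      (hF : spanGE ε (n + 1) ⊔ spanLE ε (-(n + 1)) ≤
        (spanGE ε (n + 1) ⊔ spanLE ε (-(n + 1))).comap (Fop ε (n : ℂ))),
      IsIrreducibleRep
        (Submodule.mapQ _ _ (Hop ε) hH)
        (Submodule.mapQ _ _ (Eop ε (n : ℂ)) hE)
        (Submodule.mapQ _ _ (Fop ε (n : ℂ)) hF) ∧
      (Module.finrank ℂ (V ε ⧸ (spanGE ε (n + 1) ⊔ spanLE ε (-(n + 1)))) : ℤ) = n := by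
  have hWinv := invSup hn hpos
  refine ⟨irrGE hn hpos, irrLE hn hpos, ?_, ⟨?_, maximality hn hpos⟩, ?_⟩
  · rw [spanGE_eq, spanLE_eq]
    refine disjoint_iff.mp (Finsupp.disjoint_supported_supported ?_)
    rw [Set.disjoint_left]
    intro j hj1 hj2
    have h1 : n + 1 ≤ j.1 := hj1
    have h2 : j.1 ≤ -(n + 1) := hj2
    omega
  · intro htop
    have hmem : Finsupp.single (⟨n - 1, parity_pred hn⟩ : idx ε) (1 : ℂ)
        ∈ spanGE ε (n + 1) ⊔ spanLE ε (-(n + 1)) := by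
      rw [htop]; exact Submodule.mem_top
    rw [sup_eq hn, Finsupp.mem_supported] at hmem
    have hks : (⟨n - 1, parity_pred hn⟩ : idx ε)
        ∈ (Finsupp.single (⟨n - 1, parity_pred hn⟩ : idx ε) (1 : ℂ)).support :=
      Finsupp.mem_support_iff.mpr (by simp)
    have h2 : n + 1 ≤ n - 1 ∨ n - 1 ≤ -(n + 1) := hmem hks
    omega
  · refine ⟨fun x hx => Submodule.mem_comap.mpr (hWinv.1 x hx),
      fun x hx => Submodule.mem_comap.mpr (hWinv.2.1 x hx),
      fun x hx => Submodule.mem_comap.mpr (hWinv.2.2 x hx), ?_, finrank_quot hn hpos⟩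
    intro W' hW'
    have hsurj := Submodule.mkQ_surjective (spanGE ε (n + 1) ⊔ spanLE ε (-(n + 1)))
    have hUinv : Invariant (Hop ε) (Eop ε (n : ℂ)) (Fop ε (n : ℂ))
        (W'.comap (spanGE ε (n + 1) ⊔ spanLE ε (-(n + 1))).mkQ) := by
      refine ⟨fun x hx => ?_, fun x hx => ?_, fun x hx => ?_⟩
      · have h := hW'.1 _ (Submodule.mem_comap.mp hx)
        rw [Submodule.mkQ_apply, Submodule.mapQ_apply] at h
        exact Submodule.mem_comap.mpr (by rw [Submodule.mkQ_apply]; exact h)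
      · have h := hW'.2.1 _ (Submodule.mem_comap.mp hx)
        rw [Submodule.mkQ_apply, Submodule.mapQ_apply] at h
        exact Submodule.mem_comap.mpr (by rw [Submodule.mkQ_apply]; exact h)
      · have h := hW'.2.2 _ (Submodule.mem_comap.mp hx)
        rw [Submodule.mkQ_apply, Submodule.mapQ_apply] at h
        exact Submodule.mem_comap.mpr (by rw [Submodule.mkQ_apply]; exact h)
    have hWmap : W' = Submodule.map (spanGE ε (n + 1) ⊔ spanLE ε (-(n + 1))).mkQ
        (W'.comap (spanGE ε (n + 1) ⊔ spanLE ε (-(n + 1))).mkQ) :=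
      (Submodule.map_comap_eq_of_surjective hsurj W').symm
    by_cases hUtop : W'.comap (spanGE ε (n + 1) ⊔ spanLE ε (-(n + 1))).mkQ = ⊤
    · right
      rw [hWmap, hUtop, Submodule.map_top, Submodule.range_mkQ]
    · left
      have hUle := maximality hn hpos _ hUinv hUtop
      rw [hWmap, eq_bot_iff]
      intro y hy
      obtain ⟨x, hxU, rfl⟩ := Submodule.mem_map.mp hy
      rw [Submodule.mem_bot, Submodule.mkQ_apply, Submodule.Quotient.mk_eq_zero]
      exact hUle hxU
end SL2Deform
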